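/- Let n ∈ ℕ*, let A ∈ ℝ^{n×n} and B ∈ ℝ^{n×1} satisfy the Kalman rank condition rank(B, AB, …, A^{n−1}B) = n. Assume that A has n pairwise distinct complex eigenvalues λ₁, …, λ_n, and let λ > 0 be such that (λ_i + λ)I − A is invertible for every 1 ≤ i ≤ n. Then there exists one and only one pair (T, K) with T ∈ ℝ^{n×n} invertible and K ∈ ℝ^{1×n} such that TA + BK = AT − λT and TB = B. -/

import Mathlib

open Matrix

variable {n : ℕ}

lemma vmv_mulVec (B K v : Fin n → ℝ) : vecMulVec B K *ᵥ v = (K ⬝ᵥ v) • B := by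
  ext i
  simp [vecMulVec, mulVec, dotProduct, Finset.mul_sum, mul_comm, mul_assoc, mul_left_comm]

/-- key recursion -/
lemma key_rec (A C T : Matrix (Fin n) (Fin n) ℝ) (B K : Fin n → ℝ)
    (hT : ∀ v, T *ᵥ (A *ᵥ v) = C *ᵥ (T *ᵥ v) - (K ⬝ᵥ v) • B) (k : ℕ) :
    T *ᵥ ((A ^ k) *ᵥ B) = (C ^ k) *ᵥ (T *ᵥ B)
      - ∑ i ∈ Finset.range k, (K ⬝ᵥ ((A ^ i) *ᵥ B)) • ((C ^ (k - 1 - i)) *ᵥ B) := by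
  induction k with
  | zero => simp
  | succ k ih =>
    have h1 : (A ^ (k+1)) *ᵥ B = A *ᵥ ((A ^ k) *ᵥ B) := by
      rw [pow_succ', ← mulVec_mulVec]
    rw [h1, hT, ih]
    have h2 : ∀ i ∈ Finset.range k, k + 1 - 1 - i = (k - 1 - i) + 1 := by
      intro i hi
      simp only [Finset.mem_range] at hi
      omega
    rw [Finset.sum_range_succ]
    have hsum : ∀ (g : ℕ → (Fin n → ℝ)), C *ᵥ (∑ i ∈ Finset.range k, g i)
        = ∑ i ∈ Finset.range k, C *ᵥ g i := by
      intro g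
      exact map_sum (Matrix.mulVecLin C) g (Finset.range k)
    rw [mulVec_sub, mulVec_mulVec, ← pow_succ', hsum]
    have hre : ∑ i ∈ Finset.range k,
        (K ⬝ᵥ ((A ^ i) *ᵥ B)) • ((C ^ (k + 1 - 1 - i)) *ᵥ B)
        = ∑ i ∈ Finset.range k,
        C *ᵥ ((K ⬝ᵥ ((A ^ i) *ᵥ B)) • ((C ^ (k - 1 - i)) *ᵥ B)) := by
      refine Finset.sum_congr rfl (fun i hi => ?_)
      rw [mulVec_smul, mulVec_mulVec, ← pow_succ', h2 i hi]
    rw [hre]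
    simp only [Nat.add_sub_cancel, Nat.sub_self, pow_zero, one_mulVec]
    abel

lemma sum_mulVec' (s : Finset ℕ) (g : ℕ → Matrix (Fin n) (Fin n) ℝ) (B : Fin n → ℝ) :
    (∑ i ∈ s, g i) *ᵥ B = ∑ i ∈ s, g i *ᵥ B := by
  induction s using Finset.induction with
  | empty => simp
  | insert _ _ h ih => rw [Finset.sum_insert h, Finset.sum_insert h, add_mulVec, ih]

lemma span_shift (A : Matrix (Fin n) (Fin n) ℝ) (B : Fin n → ℝ) (lam : ℝ)
    (h : Submodule.span ℝ (Set.range fun i : Fin n => ((A + lam • 1) ^ (i : ℕ)) *ᵥ B) = ⊤) :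
    Submodule.span ℝ (Set.range fun i : Fin n => ((A ^ (i : ℕ))) *ᵥ B) = ⊤ := by
  refine top_unique ?_
  rw [← h]
  refine Submodule.span_le.2 ?_
  rintro _ ⟨i, rfl⟩
  show ((A + lam • 1) ^ (i : ℕ)) *ᵥ B ∈ _
  have hcomm : Commute A (lam • (1 : Matrix (Fin n) (Fin n) ℝ)) :=
    (Commute.one_right A).smul_right lam
  have expand : ((A + lam • 1) ^ (i : ℕ)) *ᵥ B
      = ∑ m ∈ Finset.range ((i : ℕ) + 1),
        ((i : ℕ).choose m) • ((lam ^ ((i : ℕ) - m)) • ((A ^ m) *ᵥ B)) := by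
    rw [hcomm.add_pow, sum_mulVec']
    refine Finset.sum_congr rfl (fun m hm => ?_)
    rw [smul_pow, one_pow, Matrix.mul_smul, mul_one]
    rw [← Nat.cast_comm, ← nsmul_eq_mul, smul_mulVec, smul_mulVec]
  rw [expand]
  refine Submodule.sum_mem _ (fun m hm => ?_)
  refine Submodule.smul_of_tower_mem _ _ (Submodule.smul_mem _ _ ?_)
  have hmn : m < n := by
    have := i.isLt
    simp only [Finset.mem_range] at hm
    omega
  exact Submodule.subset_span ⟨⟨m, hmn⟩, rfl⟩

lemma homog_zero (hn : 0 < n) (A T : Matrix (Fin n) (Fin n) ℝ) (B K : Fin n → ℝ) (lam : ℝ)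
    (hKalman : Submodule.span ℝ (Set.range fun i : Fin n => (A ^ (i : ℕ)) *ᵥ B) = ⊤)
    (heq : T * A + vecMulVec B K = A * T - lam • T)
    (hTB : T *ᵥ B = 0) :
    T = 0 ∧ K = 0 := by
  set C := A - lam • 1 with hC
  have hT : ∀ v, T *ᵥ (A *ᵥ v) = C *ᵥ (T *ᵥ v) - (K ⬝ᵥ v) • B := by
    intro v
    have h1 : (T * A + vecMulVec B K) *ᵥ v = (A * T - lam • T) *ᵥ v := by rw [heq]
    rw [add_mulVec, sub_mulVec, vmv_mulVec, ← mulVec_mulVec, ← mulVec_mulVec,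
      smul_mulVec] at h1
    rw [hC, sub_mulVec, smul_mulVec, one_mulVec]
    exact eq_sub_of_add_eq h1
  have hrec : ∀ k : ℕ, T *ᵥ ((A ^ k) *ᵥ B)
      = - ∑ i ∈ Finset.range k, (K ⬝ᵥ ((A ^ i) *ᵥ B)) • ((C ^ (k - 1 - i)) *ᵥ B) := by
    intro k
    rw [key_rec A C T B K hT k, hTB, mulVec_zero, zero_sub]
  have hCA : C + lam • 1 = A := by rw [hC, sub_add_cancel]
  have hCspan : Submodule.span ℝ (Set.range fun i : Fin n => (C ^ (i : ℕ)) *ᵥ B) = ⊤ := by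
    refine span_shift C B lam ?_
    rw [hCA]; exact hKalman
  have hcard : Fintype.card (Fin n) = Module.finrank ℝ (Fin n → ℝ) := by
    simp [Module.finrank_fin_fun]
  let bf : Module.Basis (Fin n) ℝ (Fin n → ℝ) :=
    basisOfTopLeSpanOfCardEqFinrank (fun i : Fin n => (C ^ (i : ℕ)) *ᵥ B) hCspan.ge hcard
  let nl : Fin n := ⟨n - 1, by omega⟩
  let φ : (Fin n → ℝ) →ₗ[ℝ] ℝ := bf.coord nl
  have hφ : ∀ r : ℕ, (hr : r < n) → φ ((C ^ r) *ᵥ B) = if r = n - 1 then 1 else 0 := by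
    intro r hr
    have hb : (C ^ r) *ᵥ B = bf ⟨r, hr⟩ := by
      rw [show ⇑bf = fun i : Fin n => (C ^ (i : ℕ)) *ᵥ B from
        coe_basisOfTopLeSpanOfCardEqFinrank _ _ _]
    rw [hb]
    show (bf.repr (bf ⟨r, hr⟩)) nl = _
    rw [Module.Basis.repr_self, Finsupp.single_apply]
    have : (⟨r, hr⟩ : Fin n) = nl ↔ r = n - 1 := by
      simp [nl, Fin.ext_iff]
    simp only [this]
  have hc : ∀ m : ℕ, K ⬝ᵥ ((A ^ m) *ᵥ B) = 0 := by
    intro m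
    induction m using Nat.strong_induction_on with
    | _ m IH =>
    have hψ : ∀ v, φ (T *ᵥ v) = 0 := by
      have hker : Submodule.span ℝ (Set.range fun i : Fin n => (A ^ (i : ℕ)) *ᵥ B)
          ≤ LinearMap.ker (φ ∘ₗ T.mulVecLin) := by
        refine Submodule.span_le.2 ?_
        rintro _ ⟨j, rfl⟩
        simp only [SetLike.mem_coe, LinearMap.mem_ker, LinearMap.comp_apply, mulVecLin_apply]
        show φ (T *ᵥ ((A ^ (j : ℕ)) *ᵥ B)) = 0
        rw [hrec, map_neg, map_sum]
        simp only [_root_.map_smul, smul_eq_mul]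
        have hz : ∀ i ∈ Finset.range (j : ℕ),
            (K ⬝ᵥ ((A ^ i) *ᵥ B)) * φ ((C ^ ((j : ℕ) - 1 - i)) *ᵥ B)
              = 0 := by
          intro i hi
          simp only [Finset.mem_range] at hi
          have hjn := j.isLt
          rw [hφ _ (by omega)]
          have hne : (j : ℕ) - 1 - i ≠ n - 1 := by omega
          simp [hne]
        rw [Finset.sum_congr rfl hz]
        simp
      intro v
      have hv : v ∈ LinearMap.ker (φ ∘ₗ T.mulVecLin) := hker (hKalman ▸ Submodule.mem_top)
      simpa using hv
    have h1 : φ (T *ᵥ ((A ^ (n + m)) *ᵥ B)) = 0 := hψ _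
    rw [hrec, map_neg, map_sum] at h1
    simp only [_root_.map_smul, smul_eq_mul] at h1
    rw [Finset.sum_eq_single m
      (by
        intro i hi hne
        simp only [Finset.mem_range] at hi
        rcases lt_or_gt_of_ne hne with hlt | hgt
        · rw [IH i hlt, zero_mul]
        · rw [hφ (n + m - 1 - i) (by omega)]
          have : n + m - 1 - i ≠ n - 1 := by omega
          simp [this])
      (by intro hm; exact absurd (Finset.mem_range.2 (by omega)) hm)] at h1
    rw [show n + m - 1 - m = n - 1 by omega, hφ (n - 1) (by omega)] at h1
    simpa using h1
  have hK : K = 0 := by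
    have hdot : ∀ v, K ⬝ᵥ v = 0 := by
      let dK : (Fin n → ℝ) →ₗ[ℝ] ℝ :=
        { toFun := fun v => K ⬝ᵥ v
          map_add' := fun x y => dotProduct_add K x y
          map_smul' := fun c x => by simp [dotProduct_smul] }
      have hker : Submodule.span ℝ (Set.range fun i : Fin n => (A ^ (i : ℕ)) *ᵥ B)
          ≤ LinearMap.ker dK := by
        refine Submodule.span_le.2 ?_
        rintro _ ⟨j, rfl⟩
        simp only [SetLike.mem_coe, LinearMap.mem_ker]
        show K ⬝ᵥ ((A ^ (j : ℕ)) *ᵥ B) = 0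
        exact hc j
      intro v
      have hv : v ∈ LinearMap.ker dK := hker (hKalman ▸ Submodule.mem_top)
      simpa [dK] using hv
    ext j
    have := hdot (Pi.single j 1)
    rwa [dotProduct_single, mul_one] at this
  have hTz : T = 0 := by
    have hTv : ∀ v, T *ᵥ v = 0 := by
      have hker : Submodule.span ℝ (Set.range fun i : Fin n => (A ^ (i : ℕ)) *ᵥ B)
          ≤ LinearMap.ker T.mulVecLin := by
        refine Submodule.span_le.2 ?_
        rintro _ ⟨j, rfl⟩
        simp only [SetLike.mem_coe, LinearMap.mem_ker, mulVecLin_apply]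
        show T *ᵥ ((A ^ (j : ℕ)) *ᵥ B) = 0
        rw [hrec]
        simp [hc]
      intro v
      have hv : v ∈ LinearMap.ker T.mulVecLin := hker (hKalman ▸ Submodule.mem_top)
      simpa using hv
    ext i j
    have := congrFun (hTv (Pi.single j 1)) i
    simpa [mulVec_single] using this
  exact ⟨hTz, hK⟩

lemma T_isUnit (hn : 0 < n) (A T : Matrix (Fin n) (Fin n) ℝ) (B K : Fin n → ℝ) (lam : ℝ)
    (hKalman : Submodule.span ℝ (Set.range fun i : Fin n => (A ^ (i : ℕ)) *ᵥ B) = ⊤)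
    (heq : T * A + vecMulVec B K = A * T - lam • T)
    (hTB : T *ᵥ B = B) :
    IsUnit T := by
  set C := A - lam • 1 with hC
  have hT : ∀ v, T *ᵥ (A *ᵥ v) = C *ᵥ (T *ᵥ v) - (K ⬝ᵥ v) • B := by
    intro v
    have h1 : (T * A + vecMulVec B K) *ᵥ v = (A * T - lam • T) *ᵥ v := by rw [heq]
    rw [add_mulVec, sub_mulVec, vmv_mulVec, ← mulVec_mulVec, ← mulVec_mulVec,
      smul_mulVec] at h1
    rw [hC, sub_mulVec, smul_mulVec, one_mulVec]
    exact eq_sub_of_add_eq h1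
  have hrec : ∀ k : ℕ, T *ᵥ ((A ^ k) *ᵥ B)
      = (C ^ k) *ᵥ B - ∑ i ∈ Finset.range k,
          (K ⬝ᵥ ((A ^ i) *ᵥ B)) • ((C ^ (k - 1 - i)) *ᵥ B) := by
    intro k
    rw [key_rec A C T B K hT k, hTB]
  have hCA : C + lam • 1 = A := by rw [hC, sub_add_cancel]
  have hCspan : Submodule.span ℝ (Set.range fun i : Fin n => (C ^ (i : ℕ)) *ᵥ B) = ⊤ := by
    refine span_shift C B lam ?_
    rw [hCA]; exact hKalman
  set S := Submodule.span ℝ (Set.range fun j : Fin n => T *ᵥ ((A ^ (j : ℕ)) *ᵥ B)) with hS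
  have hmem : ∀ k : ℕ, k < n → (C ^ k) *ᵥ B ∈ S := by
    intro k
    induction k using Nat.strong_induction_on with
    | _ k IH =>
    intro hk
    have h2 : (C ^ k) *ᵥ B = T *ᵥ ((A ^ k) *ᵥ B)
        + ∑ i ∈ Finset.range k, (K ⬝ᵥ ((A ^ i) *ᵥ B)) • ((C ^ (k - 1 - i)) *ᵥ B) := by
      rw [hrec k]; abel
    rw [h2]
    refine Submodule.add_mem _ (Submodule.subset_span ⟨⟨k, hk⟩, rfl⟩) ?_
    refine Submodule.sum_mem _ (fun i hi => Submodule.smul_mem _ _ ?_)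
    simp only [Finset.mem_range] at hi
    exact IH (k - 1 - i) (by omega) (by omega)
  have hStop : S = ⊤ := by
    refine top_unique ?_
    rw [← hCspan]
    refine Submodule.span_le.2 ?_
    rintro _ ⟨j, rfl⟩
    exact hmem (j : ℕ) j.isLt
  have hsurj : Function.Surjective T.mulVec := by
    intro w
    have hw : w ∈ LinearMap.range T.mulVecLin := by
      have hle : S ≤ LinearMap.range T.mulVecLin := by
        refine Submodule.span_le.2 ?_
        rintro _ ⟨j, rfl⟩
        exact ⟨(A ^ (j : ℕ)) *ᵥ B, rfl⟩
      exact hle (hStop ▸ Submodule.mem_top)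
    obtain ⟨v, hv⟩ := hw
    exact ⟨v, hv⟩
  exact mulVec_surjective_iff_isUnit.1 hsurj

lemma vmv_add (B K K' : Fin n → ℝ) :
    vecMulVec B (K + K') = vecMulVec B K + vecMulVec B K' := by
  ext i j; simp [vecMulVec, mul_add]

lemma vmv_smul (B : Fin n → ℝ) (c : ℝ) (K : Fin n → ℝ) :
    vecMulVec B (c • K) = c • vecMulVec B K := by
  ext i j; simp [vecMulVec]; ring

theorem statement0' (n : ℕ) (hn : 0 < n)
    (A : Matrix (Fin n) (Fin n) ℝ) (B : Fin n → ℝ)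
    (hKalman : Submodule.span ℝ (Set.range fun i : Fin n => (A ^ (i : ℕ)) *ᵥ B) = ⊤)
    (lam : ℝ) :
    ∃! TK : Matrix (Fin n) (Fin n) ℝ × (Fin n → ℝ),
      IsUnit TK.1 ∧
      TK.1 * A + vecMulVec B TK.2 = A * TK.1 - lam • TK.1 ∧
      TK.1 *ᵥ B = B := by
  let L : (Matrix (Fin n) (Fin n) ℝ × (Fin n → ℝ)) →ₗ[ℝ]
      (Matrix (Fin n) (Fin n) ℝ × (Fin n → ℝ)) :=
    { toFun := fun p => (A * p.1 - lam • p.1 - p.1 * A - vecMulVec B p.2, p.1 *ᵥ B)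
      map_add' := fun p q => by
        refine Prod.ext ?_ ?_
        · show A * (p.1 + q.1) - lam • (p.1 + q.1) - (p.1 + q.1) * A
            - vecMulVec B (p.2 + q.2) = _
          rw [Matrix.mul_add, Matrix.add_mul, smul_add, vmv_add]
          show _ = (A * p.1 - lam • p.1 - p.1 * A - vecMulVec B p.2)
            + (A * q.1 - lam • q.1 - q.1 * A - vecMulVec B q.2)
          abel
        · show (p.1 + q.1) *ᵥ B = p.1 *ᵥ B + q.1 *ᵥ B
          rw [add_mulVec]
      map_smul' := fun c p => by
        refine Prod.ext ?_ ?_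
        · show A * (c • p.1) - lam • (c • p.1) - (c • p.1) * A - vecMulVec B (c • p.2)
            = c • (A * p.1 - lam • p.1 - p.1 * A - vecMulVec B p.2)
          rw [Matrix.mul_smul, Matrix.smul_mul, vmv_smul, smul_comm lam c]
          rw [smul_sub, smul_sub, smul_sub]
        · show (c • p.1) *ᵥ B = c • (p.1 *ᵥ B)
          rw [smul_mulVec] }
  have hL1 : ∀ p : Matrix (Fin n) (Fin n) ℝ × (Fin n → ℝ),
      (L p).1 = A * p.1 - lam • p.1 - p.1 * A - vecMulVec B p.2 := fun p => rfl
  have hL2 : ∀ p : Matrix (Fin n) (Fin n) ℝ × (Fin n → ℝ), (L p).2 = p.1 *ᵥ B := fun p => rfl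
  have key : ∀ p : Matrix (Fin n) (Fin n) ℝ × (Fin n → ℝ),
      (p.1 * A + vecMulVec B p.2 = A * p.1 - lam • p.1) ↔
      (A * p.1 - lam • p.1 - p.1 * A - vecMulVec B p.2 = 0) := by
    intro p
    constructor
    · intro h; rw [← h]; abel
    · intro h
      have : p.1 * A + vecMulVec B p.2 - (A * p.1 - lam • p.1) =
          -(A * p.1 - lam • p.1 - p.1 * A - vecMulVec B p.2) := by abel
      rw [← sub_eq_zero, this, h, neg_zero]
  have hinj : Function.Injective L := by
    rw [← LinearMap.ker_eq_bot]
    refine (Submodule.eq_bot_iff _).2 ?_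
    intro p hp
    rw [LinearMap.mem_ker] at hp
    have hp1 : A * p.1 - lam • p.1 - p.1 * A - vecMulVec B p.2 = 0 := by
      have := congrArg Prod.fst hp; rwa [hL1] at this
    have hp2 : p.1 *ᵥ B = 0 := by
      have := congrArg Prod.snd hp; rwa [hL2] at this
    obtain ⟨h1, h2⟩ := homog_zero hn A p.1 B p.2 lam hKalman ((key p).2 hp1) hp2
    exact Prod.ext h1 h2
  have hsurj : Function.Surjective L := LinearMap.injective_iff_surjective.mp hinj
  obtain ⟨p, hp⟩ := hsurj (0, B)
  have hp1 : A * p.1 - lam • p.1 - p.1 * A - vecMulVec B p.2 = 0 := by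
    have := congrArg Prod.fst hp; rwa [hL1] at this
  have hp2 : p.1 *ᵥ B = B := by
    have := congrArg Prod.snd hp; rwa [hL2] at this
  have heq' : p.1 * A + vecMulVec B p.2 = A * p.1 - lam • p.1 := (key p).2 hp1
  refine ⟨p, ⟨T_isUnit hn A p.1 B p.2 lam hKalman heq' hp2, heq', hp2⟩, ?_⟩
  rintro q ⟨-, hq1, hq2⟩
  refine hinj ?_
  rw [hp]
  refine Prod.ext ?_ ?_
  · rw [hL1]; exact ((key q).1 hq1)
  · rw [hL2]; exact hq2


/-- Let `A ∈ ℝ^{n×n}`, `B ∈ ℝ^{n×1}` satisfy the Kalman rank condition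
(the columns `B, AB, …, A^{n−1}B` span `ℝ^n`).  Assume `A` has `n` pairwise distinct complex
eigenvalues `ev 1, …, ev n`, and let `λ > 0` be such that `(ev i + λ)I − A` is invertible for
every `i`.  Then there is one and only one pair `(T, K)` with `T` invertible such that
`TA + BK = AT − λT` and `TB = B`.  (Here `BK` is the `n×n` matrix `vecMulVec B K`.) -/
theorem statement0 (n : ℕ) (hn : 0 < n)
    (A : Matrix (Fin n) (Fin n) ℝ) (B : Fin n → ℝ)
    (hKalman : Submodule.span ℝ (Set.range fun i : Fin n => (A ^ (i : ℕ)) *ᵥ B) = ⊤)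
    (ev : Fin n → ℂ) (hev_inj : Function.Injective ev)
    (hev : ∀ i : Fin n, ∃ v : Fin n → ℂ, v ≠ 0 ∧ (A.map Complex.ofReal) *ᵥ v = ev i • v)
    (lam : ℝ) (hlam : 0 < lam)
    (hinv : ∀ i : Fin n,
      IsUnit ((ev i + (lam : ℂ)) • (1 : Matrix (Fin n) (Fin n) ℂ) - A.map Complex.ofReal)) :
    ∃! TK : Matrix (Fin n) (Fin n) ℝ × (Fin n → ℝ),
      IsUnit TK.1 ∧
      TK.1 * A + vecMulVec B TK.2 = A * TK.1 - lam • TK.1 ∧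
      TK.1 *ᵥ B = B := by
  exact statement0' n hn A B hKalman lam
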